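/- Let V be a real inner product space of dimension m with orthonormal basis e₁,…,e_m, and let c(e_j) = e^j∧ − ι_{e_j}, ĉ(e_j) = e^j∧ + ι_{e_j} act on Λ(V*). Then the supertrace (with respect to the even/odd grading of Λ(V*)) of the operator c(e₁)ĉ(e₁)·c(e₂)ĉ(e₂)·…·c(e_m)ĉ(e_m) equals (−2)^m. -/
import Mathlib


open Finset

/- We model the exterior algebra `Λ(V*)` of an `m`-dimensional real inner product space,
in the orthonormal basis `e^I` (`I ⊆ {1,…,m}`); operators are represented by matrices. -/

/-- Matrix of exterior multiplication `e^i ∧ ·`. -/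
noncomputable def wedgeM (m : ℕ) (i : Fin m) :
    Matrix (Finset (Fin m)) (Finset (Fin m)) ℝ :=
  Matrix.of fun J K =>
    if i ∉ K ∧ J = insert i K then (-1 : ℝ) ^ (K.filter fun j => j < i).card else 0

/-- Matrix of interior multiplication (contraction) `ι_{e_i}`. -/
noncomputable def contrM (m : ℕ) (i : Fin m) :
    Matrix (Finset (Fin m)) (Finset (Fin m)) ℝ :=
  Matrix.of fun J K =>
    if i ∈ K ∧ J = K.erase i then (-1 : ℝ) ^ (K.filter fun j => j < i).card else 0

/-- `c(e_i) = e^i∧ − ι_{e_i}`. -/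
noncomputable def cM (m : ℕ) (i : Fin m) := wedgeM m i - contrM m i

/-- `ĉ(e_i) = e^i∧ + ι_{e_i}`. -/
noncomputable def hcM (m : ℕ) (i : Fin m) := wedgeM m i + contrM m i

/-- The grading operator `τ = (−1)^{deg}` of the ℤ₂-grading `Λ^even ⊕ Λ^odd`. -/
noncomputable def tauM (m : ℕ) : Matrix (Finset (Fin m)) (Finset (Fin m)) ℝ :=
  Matrix.diagonal fun J => (-1 : ℝ) ^ J.card

lemma ww (m : ℕ) (i : Fin m) : wedgeM m i * wedgeM m i = 0 := by
  ext J K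
  simp only [Matrix.mul_apply, wedgeM, Matrix.of_apply, Matrix.zero_apply]
  apply Finset.sum_eq_zero
  intro L _
  split_ifs with h1 h2 <;> try ring
  exact absurd (h2.2 ▸ Finset.mem_insert_self i K) h1.1

lemma cc (m : ℕ) (i : Fin m) : contrM m i * contrM m i = 0 := by
  ext J K
  simp only [Matrix.mul_apply, contrM, Matrix.of_apply, Matrix.zero_apply]
  apply Finset.sum_eq_zero
  intro L _
  split_ifs with h1 h2 <;> try ring
  exact absurd (h2.2 ▸ h1.1) (Finset.notMem_erase i K)

lemma wc (m : ℕ) (i : Fin m) :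
    wedgeM m i * contrM m i = Matrix.of fun J K => if i ∈ K ∧ J = K then 1 else 0 := by
  ext J K
  simp only [Matrix.mul_apply, wedgeM, contrM, Matrix.of_apply]
  rw [Finset.sum_eq_single (K.erase i)]
  · by_cases h : i ∈ K
    · have h1 : i ∉ K.erase i := Finset.notMem_erase i K
      have h2 : insert i (K.erase i) = K := Finset.insert_erase h
      have h3 : (K.erase i).filter (fun j => j < i) = K.filter (fun j => j < i) := by
        ext x
        simp only [Finset.mem_filter, Finset.mem_erase]
        constructor
        · rintro ⟨⟨_, hx⟩, hlt⟩; exact ⟨hx, hlt⟩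
        · rintro ⟨hx, hlt⟩; exact ⟨⟨ne_of_lt hlt, hx⟩, hlt⟩
      simp only [h, h1, h2, h3, not_false_iff, true_and, and_true, if_true]
      split_ifs with hJ
      case neg => ring
      rw [← pow_add]
      exact Even.neg_one_pow ⟨_, rfl⟩
    · simp [h]
  · intro L _ hL
    simp [hL]
  · simp

lemma cw (m : ℕ) (i : Fin m) :
    contrM m i * wedgeM m i = Matrix.of fun J K => if i ∉ K ∧ J = K then 1 else 0 := by
  ext J K
  simp only [Matrix.mul_apply, wedgeM, contrM, Matrix.of_apply]
  rw [Finset.sum_eq_single (insert i K)]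
  · by_cases h : i ∈ K
    · simp [h]
    · have h1 : i ∈ insert i K := Finset.mem_insert_self i K
      have h2 : (insert i K).erase i = K := Finset.erase_insert h
      have h3 : (insert i K).filter (fun j => j < i) = K.filter (fun j => j < i) := by
        ext x
        simp only [Finset.mem_filter, Finset.mem_insert]
        constructor
        · rintro ⟨hx | hx, hlt⟩
          · exact absurd hlt (hx ▸ lt_irrefl i)
          · exact ⟨hx, hlt⟩
        · rintro ⟨hx, hlt⟩; exact ⟨Or.inr hx, hlt⟩
      simp only [h, h1, h2, h3, not_false_iff, true_and, and_true, if_true]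
      split_ifs with hJ
      case neg => ring
      rw [← pow_add]
      exact Even.neg_one_pow ⟨_, rfl⟩
  · intro L _ hL
    simp [hL]
  · simp

lemma chc (m : ℕ) (i : Fin m) :
    cM m i * hcM m i = Matrix.diagonal fun K => if i ∈ K then (1:ℝ) else -1 := by
  have e : cM m i * hcM m i =
      wedgeM m i * wedgeM m i + wedgeM m i * contrM m i
        - (contrM m i * wedgeM m i + contrM m i * contrM m i) := by
    unfold cM hcM; noncomm_ring
  rw [e, ww, cc, wc, cw]
  ext J K
  by_cases h : J = K <;> by_cases hi : i ∈ K <;>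
    simp [Matrix.diagonal_apply, h, hi]


/-- The supertrace `Tr_s[c(e₁)ĉ(e₁)⋯c(e_m)ĉ(e_m)] = Tr[τ · c(e₁)ĉ(e₁)⋯c(e_m)ĉ(e_m)]`
equals `(−2)^m`. -/
theorem stmt9 (m : ℕ) :
    (tauM m * (List.ofFn fun i : Fin m => cM m i * hcM m i).prod).trace
      = (-2 : ℝ) ^ m := by
  have hprod : (List.ofFn fun i : Fin m => cM m i * hcM m i).prod =
      Matrix.diagonal fun K => ∏ i : Fin m, (if i ∈ K then (1:ℝ) else -1) := by
    have e : (List.ofFn fun i : Fin m => cM m i * hcM m i) =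
        (List.ofFn fun i : Fin m => (fun K => if i ∈ K then (1:ℝ) else -1)).map
          (Matrix.diagonalRingHom (Finset (Fin m)) ℝ) := by
      simp only [List.map_ofFn]
      congr 1
      funext i
      exact chc m i
    rw [e, ← map_list_prod, List.prod_ofFn]
    show Matrix.diagonal _ = _
    have hfun : (∏ i : Fin m, fun K : Finset (Fin m) => if i ∈ K then (1:ℝ) else -1)
        = fun K => ∏ i : Fin m, (if i ∈ K then (1:ℝ) else -1) := by
      funext K; rw [Finset.prod_apply]
    rw [hfun]
  rw [hprod]
  unfold tauM
  rw [Matrix.diagonal_mul_diagonal, Matrix.trace_diagonal]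
  have key : ∀ K : Finset (Fin m),
      (-1:ℝ) ^ K.card * ∏ i : Fin m, (if i ∈ K then (1:ℝ) else -1) = (-1) ^ m := by
    intro K
    have h2 : ∏ i : Fin m, (if i ∈ K then (1:ℝ) else -1) = (-1) ^ (m - K.card) := by
      rw [← Finset.prod_compl_mul_prod K]
      rw [Finset.prod_congr rfl (fun i hi => if_neg (Finset.mem_compl.mp hi)),
        Finset.prod_congr rfl (fun i hi => if_pos hi)]
      simp [Finset.card_compl]
    rw [h2, ← pow_add, Nat.add_sub_cancel' (by simpa using Finset.card_le_univ K)]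
  rw [Finset.sum_congr rfl (fun K _ => key K), Finset.sum_const]
  rw [Finset.card_univ, Fintype.card_finset, Fintype.card_fin, nsmul_eq_mul]
  rw [neg_pow (2:ℝ) m]
  push_cast
  ring
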